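/- For all Schwartz functions f, g on ℝ^{2n+1} and all k ∈ {1,2}, 1 ≤ j ≤ n: T_{kj}(f *₁ g) = T_{kj}f *₁ g + f *₁ T_{kj}g, and moreover T₃(f *₁ g) = T₃f *₁ g + f *₁ T₃g + Σ_{j=1}^n T_{1j}f *₁ T_{2j}g. -/

import Mathlib

open MeasureTheory Complex Topology Filter
open scoped RealInnerProductSpace ENNReal

noncomputable section

/-- `ℝⁿ` as a Euclidean space. -/
abbrev E (n : ℕ) := EuclideanSpace ℝ (Fin n)

/-- The underlying space `ℝⁿ × ℝⁿ × ℝ` of the Heisenberg group `𝕙ⁿ`. -/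
abbrev H (n : ℕ) := E n × E n × ℝ

/-- Heisenberg multiplication. -/
def hmul {n : ℕ} (u v : H n) : H n :=
  (u.1 + v.1, u.2.1 + v.2.1, u.2.2 + v.2.2 + ⟪u.1, v.2.1⟫)

/-- Heisenberg inverse. -/
def hinv {n : ℕ} (u : H n) : H n := (-u.1, -u.2.1, -u.2.2 + ⟪u.1, u.2.1⟫)

/-- Heisenberg convolution `(F *₁ G)(u) = ∫ F(u ∘ v⁻¹) G(v) dv`. -/
def conv1 {n : ℕ} (F G : H n → ℂ) (u : H n) : ℂ := ∫ v, F (hmul u (hinv v)) * G v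

/-! ### Auxiliary lemmas -/

instance aux_haar1 {n : ℕ} : (volume : Measure (E n × ℝ)).IsAddHaarMeasure :=
  Measure.prod.instIsAddHaarMeasure _ _

instance aux_haar2 {n : ℕ} : (volume : Measure (H n)).IsAddHaarMeasure :=
  Measure.prod.instIsAddHaarMeasure _ _

lemma aux_coord1_le {n : ℕ} (x : H n) (j : Fin n) : |x.1 j| ≤ ‖x‖ := by
  refine le_trans ?_ (norm_fst_le x)
  rw [← Real.sqrt_sq_eq_abs, EuclideanSpace.norm_eq]
  apply Real.sqrt_le_sqrt
  calc (x.1 j) ^ 2 = ‖x.1 j‖ ^ 2 := by simp [Real.norm_eq_abs, _root_.sq_abs]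
    _ ≤ ∑ i, ‖x.1 i‖ ^ 2 :=
      Finset.single_le_sum (f := fun i => ‖x.1 i‖ ^ 2) (fun i _ => sq_nonneg _)
        (Finset.mem_univ j)

lemma aux_coord2_le {n : ℕ} (x : H n) (j : Fin n) : |x.2.1 j| ≤ ‖x‖ := by
  refine le_trans (le_trans ?_ (norm_fst_le x.2)) (norm_snd_le x)
  rw [← Real.sqrt_sq_eq_abs, EuclideanSpace.norm_eq]
  apply Real.sqrt_le_sqrt
  calc (x.2.1 j) ^ 2 = ‖x.2.1 j‖ ^ 2 := by simp [Real.norm_eq_abs, _root_.sq_abs]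
    _ ≤ ∑ i, ‖x.2.1 i‖ ^ 2 :=
      Finset.single_le_sum (f := fun i => ‖x.2.1 i‖ ^ 2) (fun i _ => sq_nonneg _)
        (Finset.mem_univ j)

lemma aux_coord3_le {n : ℕ} (x : H n) : |x.2.2| ≤ ‖x‖ :=
  le_trans (norm_snd_le x.2) (norm_snd_le x)

/-- Boundedness of a coordinate times a Schwartz function. -/
lemma aux_bdd {n : ℕ} (f : SchwartzMap (H n) ℂ) (c : H n → ℝ) (hc : ∀ x, |c x| ≤ ‖x‖) :
    ∃ C, ∀ x, ‖(c x : ℂ) * f x‖ ≤ C := by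
  obtain ⟨C, hC⟩ := f.decay 1 0
  refine ⟨C, fun x => ?_⟩
  have h := hC.2 x
  rw [norm_iteratedFDeriv_zero, pow_one] at h
  calc ‖(c x : ℂ) * f x‖ = |c x| * ‖f x‖ := by
        rw [norm_mul, Complex.norm_real, Real.norm_eq_abs]
    _ ≤ ‖x‖ * ‖f x‖ := by gcongr; exact hc x
    _ ≤ C := h

/-- Integrability of a coordinate times a Schwartz function. -/
lemma aux_int {n : ℕ} (g : SchwartzMap (H n) ℂ) (c : H n → ℝ) (hc : ∀ x, |c x| ≤ ‖x‖)
    (hcont : Continuous c) : Integrable (fun v => (c v : ℂ) * g v) := by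
  refine (g.integrable_pow_mul volume 1).mono
    (((Complex.continuous_ofReal.comp hcont).mul g.continuous).aestronglyMeasurable) ?_
  filter_upwards with v
  rw [norm_mul, Complex.norm_real, Real.norm_eq_abs]
  calc |c v| * ‖g v‖ ≤ ‖v‖ * ‖g v‖ := by gcongr; exact hc v
    _ ≤ ‖‖v‖ ^ 1 * ‖g v‖‖ := by rw [pow_one]; exact le_abs_self _

lemma aux_cont_phi {n : ℕ} (u : H n) : Continuous (fun v : H n => hmul u (hinv v)) := by
  unfold hmul hinv
  refine Continuous.prodMk ?_ (Continuous.prodMk ?_ ?_)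
  · exact continuous_const.add continuous_fst.neg
  · exact continuous_const.add (continuous_fst.comp continuous_snd).neg
  · refine ((continuous_const.add ?_).add ?_)
    · exact ((continuous_snd.comp continuous_snd).neg).add
        (Continuous.inner continuous_fst (continuous_fst.comp continuous_snd))
    · exact Continuous.inner continuous_const ((continuous_fst.comp continuous_snd).neg)

/-- Integrability for the convolution integrand. -/
lemma aux_int_conv {n : ℕ} (u : H n) (F G : H n → ℂ) (hF : Continuous F)
    (hFb : ∃ C, ∀ x, ‖F x‖ ≤ C) (hG : Integrable G) :
    Integrable (fun v => F (hmul u (hinv v)) * G v) := by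
  obtain ⟨C, hC⟩ := hFb
  exact hG.bdd_mul ((hF.comp (aux_cont_phi u)).aestronglyMeasurable)
    (Filter.Eventually.of_forall fun v => hC _)

lemma aux_cont_coord1 {n : ℕ} (j : Fin n) : Continuous (fun x : H n => x.1 j) := by
  have : Continuous (fun y : E n => y j) := (EuclideanSpace.proj (𝕜 := ℝ) j).continuous
  exact this.comp continuous_fst

lemma aux_cont_coord2 {n : ℕ} (j : Fin n) : Continuous (fun x : H n => x.2.1 j) := by
  have : Continuous (fun y : E n => y j) := (EuclideanSpace.proj (𝕜 := ℝ) j).continuous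
  exact this.comp (continuous_fst.comp continuous_snd)

lemma aux_cont_coord3 {n : ℕ} : Continuous (fun x : H n => x.2.2) :=
  continuous_snd.comp continuous_snd

theorem statement2 (n : ℕ) (f g : SchwartzMap (H n) ℂ) :
    (∀ j : Fin n, ∀ u : H n,
        (u.1 j : ℂ) * conv1 (⇑f) (⇑g) u
          = conv1 (fun w => (w.1 j : ℂ) * f w) (⇑g) u
            + conv1 (⇑f) (fun w => (w.1 j : ℂ) * g w) u) ∧
    (∀ j : Fin n, ∀ u : H n,
        (u.2.1 j : ℂ) * conv1 (⇑f) (⇑g) u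
          = conv1 (fun w => (w.2.1 j : ℂ) * f w) (⇑g) u
            + conv1 (⇑f) (fun w => (w.2.1 j : ℂ) * g w) u) ∧
    (∀ u : H n,
        (u.2.2 : ℂ) * conv1 (⇑f) (⇑g) u
          = conv1 (fun w => (w.2.2 : ℂ) * f w) (⇑g) u
            + conv1 (⇑f) (fun w => (w.2.2 : ℂ) * g w) u
            + ∑ j : Fin n,
                conv1 (fun w => (w.1 j : ℂ) * f w) (fun w => (w.2.1 j : ℂ) * g w) u) := by
  have hgint : Integrable (⇑g) := g.integrable
  have hfbdd : ∃ C, ∀ x, ‖f x‖ ≤ C := by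
    obtain ⟨C, hC⟩ := f.decay 0 0
    exact ⟨C, fun x => by simpa using hC.2 x⟩
  refine ⟨?_, ?_, ?_⟩
  · intro j u
    have h1 : Integrable (fun v => (fun w => ((w.1 j : ℝ) : ℂ) * f w) (hmul u (hinv v)) * g v) :=
      aux_int_conv u _ _ ((Complex.continuous_ofReal.comp (aux_cont_coord1 j)).mul f.continuous)
        (aux_bdd f _ (fun x => aux_coord1_le x j)) hgint
    have h2 : Integrable (fun v => f (hmul u (hinv v)) * ((v.1 j : ℂ) * g v)) :=
      aux_int_conv u _ _ f.continuous hfbdd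
        (aux_int g _ (fun x => aux_coord1_le x j) (aux_cont_coord1 j))
    rw [conv1, ← integral_const_mul]
    rw [conv1, conv1, ← integral_add h1 h2]
    congr 1
    ext v
    have hw : (hmul u (hinv v)).1 j = u.1 j - v.1 j := by
      simp [hmul, hinv, PiLp.add_apply, PiLp.neg_apply]
      ring
    simp only
    rw [hw]
    push_cast
    ring
  · intro j u
    have h1 : Integrable (fun v => (fun w => ((w.2.1 j : ℝ) : ℂ) * f w) (hmul u (hinv v)) * g v) :=
      aux_int_conv u _ _ ((Complex.continuous_ofReal.comp (aux_cont_coord2 j)).mul f.continuous)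
        (aux_bdd f _ (fun x => aux_coord2_le x j)) hgint
    have h2 : Integrable (fun v => f (hmul u (hinv v)) * ((v.2.1 j : ℂ) * g v)) :=
      aux_int_conv u _ _ f.continuous hfbdd
        (aux_int g _ (fun x => aux_coord2_le x j) (aux_cont_coord2 j))
    rw [conv1, ← integral_const_mul]
    rw [conv1, conv1, ← integral_add h1 h2]
    congr 1
    ext v
    have hw : (hmul u (hinv v)).2.1 j = u.2.1 j - v.2.1 j := by
      simp [hmul, hinv, PiLp.add_apply, PiLp.neg_apply]
      ring
    simp only
    rw [hw]
    push_cast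
    ring
  · intro u
    have h1 : Integrable (fun v : H n =>
        (((hmul u (hinv v)).2.2 : ℝ) : ℂ) * f (hmul u (hinv v)) * g v) :=
      aux_int_conv u (fun w => ((w.2.2 : ℝ) : ℂ) * f w) _
        ((Complex.continuous_ofReal.comp aux_cont_coord3).mul f.continuous)
        (aux_bdd f _ aux_coord3_le) hgint
    have h2 : Integrable (fun v : H n => f (hmul u (hinv v)) * ((v.2.2 : ℂ) * g v)) :=
      aux_int_conv u _ _ f.continuous hfbdd
        (aux_int g _ aux_coord3_le aux_cont_coord3)
    have h3 : ∀ j : Fin n, Integrable (fun v : H n =>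
        (((hmul u (hinv v)).1 j : ℝ) : ℂ) * f (hmul u (hinv v)) * ((v.2.1 j : ℂ) * g v)) :=
      fun j => aux_int_conv u (fun w => ((w.1 j : ℝ) : ℂ) * f w) _
        ((Complex.continuous_ofReal.comp (aux_cont_coord1 j)).mul f.continuous)
        (aux_bdd f _ (fun x => aux_coord1_le x j))
        (aux_int g _ (fun x => aux_coord2_le x j) (aux_cont_coord2 j))
    have h3' : Integrable (fun v : H n => ∑ j : Fin n,
        (((hmul u (hinv v)).1 j : ℝ) : ℂ) * f (hmul u (hinv v)) * ((v.2.1 j : ℂ) * g v)) :=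
      integrable_finset_sum _ (fun j _ => h3 j)
    have key : ∀ v : H n, ((u.2.2 : ℝ) : ℂ) * (f (hmul u (hinv v)) * g v)
        = ((((hmul u (hinv v)).2.2 : ℝ) : ℂ) * f (hmul u (hinv v)) * g v
            + f (hmul u (hinv v)) * ((v.2.2 : ℂ) * g v))
          + ∑ j : Fin n,
            (((hmul u (hinv v)).1 j : ℝ) : ℂ) * f (hmul u (hinv v)) * ((v.2.1 j : ℂ) * g v) := by
      intro v
      have hw3 : (hmul u (hinv v)).2.2
          = u.2.2 - v.2.2 + ⟪v.1, v.2.1⟫ - ⟪u.1, v.2.1⟫ := by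
        simp [hmul, hinv, inner_neg_right]
        ring
      have hw1 : ∀ j, (hmul u (hinv v)).1 j = u.1 j - v.1 j := by
        intro j
        simp [hmul, hinv, PiLp.add_apply, PiLp.neg_apply]
        ring
      have hinner : (⟪u.1, v.2.1⟫ - ⟪v.1, v.2.1⟫ : ℝ)
          = ∑ j : Fin n, (u.1 j - v.1 j) * v.2.1 j := by
        rw [← inner_sub_left, PiLp.inner_apply]
        simp [RCLike.inner_apply]
        exact Finset.sum_congr rfl (fun i _ => mul_comm _ _)
      have hu3 : (u.2.2 : ℝ) = (hmul u (hinv v)).2.2 + v.2.2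
          + ∑ j : Fin n, (hmul u (hinv v)).1 j * v.2.1 j := by
        rw [hw3]
        have heq : ∑ j : Fin n, (hmul u (hinv v)).1 j * v.2.1 j
            = ∑ j : Fin n, (u.1 j - v.1 j) * v.2.1 j :=
          Finset.sum_congr rfl (fun j _ => by rw [hw1 j])
        rw [heq, ← hinner]
        ring
      rw [hu3]
      push_cast
      ring_nf
      congr 1
      rw [Finset.sum_mul, Finset.sum_mul]
      exact Finset.sum_congr rfl (fun x _ => by ring)
    calc (u.2.2 : ℂ) * conv1 (⇑f) (⇑g) u
        = ∫ v : H n, ((u.2.2 : ℝ) : ℂ) * (f (hmul u (hinv v)) * g v) := by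
          rw [conv1, ← integral_const_mul]
      _ = ∫ v : H n, (((((hmul u (hinv v)).2.2 : ℝ) : ℂ) * f (hmul u (hinv v)) * g v
            + f (hmul u (hinv v)) * ((v.2.2 : ℂ) * g v))
          + ∑ j : Fin n,
            (((hmul u (hinv v)).1 j : ℝ) : ℂ) * f (hmul u (hinv v)) * ((v.2.1 j : ℂ) * g v)) := by
          exact integral_congr_ae (Filter.Eventually.of_forall key)
      _ = (∫ v : H n, ((((hmul u (hinv v)).2.2 : ℝ) : ℂ) * f (hmul u (hinv v)) * g v
            + f (hmul u (hinv v)) * ((v.2.2 : ℂ) * g v)))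
          + ∫ v : H n, ∑ j : Fin n,
            (((hmul u (hinv v)).1 j : ℝ) : ℂ) * f (hmul u (hinv v)) * ((v.2.1 j : ℂ) * g v) :=
          integral_add (h1.add h2) h3'
      _ = ((∫ v : H n, (((hmul u (hinv v)).2.2 : ℝ) : ℂ) * f (hmul u (hinv v)) * g v)
            + ∫ v : H n, f (hmul u (hinv v)) * ((v.2.2 : ℂ) * g v))
          + ∫ v : H n, ∑ j : Fin n,
            (((hmul u (hinv v)).1 j : ℝ) : ℂ) * f (hmul u (hinv v)) * ((v.2.1 j : ℂ) * g v) := by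
          rw [integral_add h1 h2]
      _ = ((∫ v : H n, (((hmul u (hinv v)).2.2 : ℝ) : ℂ) * f (hmul u (hinv v)) * g v)
            + ∫ v : H n, f (hmul u (hinv v)) * ((v.2.2 : ℂ) * g v))
          + ∑ j : Fin n, ∫ v : H n,
            (((hmul u (hinv v)).1 j : ℝ) : ℂ) * f (hmul u (hinv v)) * ((v.2.1 j : ℂ) * g v) := by
          rw [integral_finset_sum _ (fun j _ => h3 j)]
      _ = conv1 (fun w => (w.2.2 : ℂ) * f w) (⇑g) u
            + conv1 (⇑f) (fun w => (w.2.2 : ℂ) * g w) u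
            + ∑ j : Fin n,
                conv1 (fun w => (w.1 j : ℂ) * f w) (fun w => (w.2.1 j : ℂ) * g w) u := by
          simp only [conv1]
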